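/- If m is not principal, then Hom_R(m, R) = Hom_R(m, m), i.e., every R-linear map from m to R has image contained in m. -/
import Mathlib


/-- Over a one-dimensional Noetherian local domain `(R, m, k)` with `m` not
principal, every `R`-linear map from `m` to `R` has image contained in `m`, i.e.
`Hom_R(m, R) = Hom_R(m, m)`. -/
theorem stmt1 (R : Type*) [CommRing R] [IsDomain R] [IsNoetherianRing R] [IsLocalRing R]
    (hdim : ringKrullDim R = 1)
    (hnp : ¬ (IsLocalRing.maximalIdeal R).IsPrincipal) :
    ∀ f : (IsLocalRing.maximalIdeal R) →ₗ[R] R, ∀ x, f x ∈ IsLocalRing.maximalIdeal R := by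
  intro f x
  by_contra hx
  have hu : IsUnit (f x) := by
    by_contra h
    exact hx ((IsLocalRing.mem_maximalIdeal _).mpr h)
  obtain ⟨u, hu'⟩ := hu
  apply hnp
  refine ⟨⟨x.1, ?_⟩⟩
  ext y
  simp only [Ideal.submodule_span_eq, Ideal.mem_span_singleton]
  constructor
  · intro hy
    refine ⟨(↑u⁻¹ : R) * f ⟨y, hy⟩, ?_⟩
    have key : x.1 * f ⟨y, hy⟩ = y * f x := by
      have h1 : f (x.1 • (⟨y, hy⟩ : IsLocalRing.maximalIdeal R)) = x.1 * f ⟨y, hy⟩ := by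
        rw [map_smul]; rfl
      have h2 : f (y • x) = y * f x := by
        rw [map_smul]; rfl
      have h3 : x.1 • (⟨y, hy⟩ : IsLocalRing.maximalIdeal R) = y • x := by
        ext; simp [mul_comm]
      rw [← h1, ← h2, h3]
    have : y * f x * ↑u⁻¹ = y := by
      rw [← hu', Units.mul_inv_cancel_right]
    calc y = y * f x * ↑u⁻¹ := this.symm
      _ = x.1 * f ⟨y, hy⟩ * ↑u⁻¹ := by rw [key]
      _ = x.1 * ((↑u⁻¹ : R) * f ⟨y, hy⟩) := by ring
  · rintro ⟨c, rfl⟩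
    exact Ideal.mul_mem_right _ _ x.2
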